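/- The polynomial D(z) = (1-z)^{10} - (75/8)(1-z)^7 z^2 + (42525/2048)(1-z)^4 z^4 - (202125/32768)(1-z) z^6 is strictly decreasing on [0, 1/4], and hence attains its minimum on [0,1/4] at z = 1/4. -/

import Mathlib

open Set

private lemma aux_deriv (x : ℝ) :
    HasDerivAt (fun z : ℝ =>
        (1 - z) ^ 10 - 75 / 8 * (1 - z) ^ 7 * z ^ 2
          + 42525 / 2048 * (1 - z) ^ 4 * z ^ 4
          - 202125 / 32768 * (1 - z) * z ^ 6)
      (-10 + 285/4*x - 1305/8*x^2 + 69405/512*x^3 - 17745/512*x^4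
        + 28665/16384*x^5 - 3045/32768*x^6 + 285/256*x^7 - 45/8*x^8 + 10*x^9) x := by
  have hu : HasDerivAt (fun z : ℝ => 1 - z) (-1) x := (hasDerivAt_id x).const_sub 1
  have hz : HasDerivAt (fun z : ℝ => z) 1 x := hasDerivAt_id x
  have h1 := hu.pow 10
  have h2 := ((hu.pow 7).mul (hz.pow 2)).const_mul (75/8 : ℝ)
  have h3 := ((hu.pow 4).mul (hz.pow 4)).const_mul (42525/2048 : ℝ)
  have h4 := (hu.mul (hz.pow 6)).const_mul (202125/32768 : ℝ)
  have h := ((h1.sub h2).add h3).sub h4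
  convert h using 1
  · rfl
  · rfl
  · funext y; simp only [Pi.pow_apply, Pi.sub_apply, Pi.add_apply, Pi.mul_apply]; ring
  · push_cast; simp only [Pi.pow_apply, Pi.mul_apply]; ring

private lemma aux_neg (x : ℝ) (h0 : 0 ≤ x) (h1 : x ≤ 1/4) :
    (-10 + 285/4*x - 1305/8*x^2 + 69405/512*x^3 - 17745/512*x^4
        + 28665/16384*x^5 - 3045/32768*x^6 + 285/256*x^7 - 45/8*x^8 + 10*x^9 : ℝ) < 0 := by
  nlinarith [sq_nonneg x, sq_nonneg (x - 1/4), sq_nonneg (x^2), sq_nonneg (x^3), sq_nonneg (x^4),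
    mul_nonneg h0 h0, pow_le_pow_left₀ h0 h1 2, pow_le_pow_left₀ h0 h1 3,
    pow_le_pow_left₀ h0 h1 4, pow_le_pow_left₀ h0 h1 5, pow_le_pow_left₀ h0 h1 6,
    pow_le_pow_left₀ h0 h1 7, pow_le_pow_left₀ h0 h1 8, pow_le_pow_left₀ h0 h1 9,
    pow_nonneg h0 2, pow_nonneg h0 3, pow_nonneg h0 4, pow_nonneg h0 5,
    pow_nonneg h0 6, pow_nonneg h0 7, pow_nonneg h0 8, pow_nonneg h0 9]

theorem stmt_16 :
    StrictAntiOn (fun z : ℝ =>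
        (1 - z) ^ 10 - 75 / 8 * (1 - z) ^ 7 * z ^ 2
          + 42525 / 2048 * (1 - z) ^ 4 * z ^ 4
          - 202125 / 32768 * (1 - z) * z ^ 6)
      (Icc 0 (1 / 4)) ∧
      ∀ z ∈ Icc (0 : ℝ) (1 / 4),
        (1 - (1 / 4 : ℝ)) ^ 10 - 75 / 8 * (1 - (1 / 4 : ℝ)) ^ 7 * (1 / 4 : ℝ) ^ 2
            + 42525 / 2048 * (1 - (1 / 4 : ℝ)) ^ 4 * (1 / 4 : ℝ) ^ 4
            - 202125 / 32768 * (1 - (1 / 4 : ℝ)) * (1 / 4 : ℝ) ^ 6 ≤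
          (1 - z) ^ 10 - 75 / 8 * (1 - z) ^ 7 * z ^ 2
            + 42525 / 2048 * (1 - z) ^ 4 * z ^ 4
            - 202125 / 32768 * (1 - z) * z ^ 6 := by
  have hanti : StrictAntiOn (fun z : ℝ =>
        (1 - z) ^ 10 - 75 / 8 * (1 - z) ^ 7 * z ^ 2
          + 42525 / 2048 * (1 - z) ^ 4 * z ^ 4
          - 202125 / 32768 * (1 - z) * z ^ 6) (Icc 0 (1 / 4)) := by
    apply strictAntiOn_of_deriv_neg (convex_Icc _ _)
    · fun_prop
    · intro x hx
      rw [interior_Icc] at hx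
      rw [(aux_deriv x).deriv]
      exact aux_neg x hx.1.le hx.2.le
  refine ⟨hanti, fun z hz => ?_⟩
  rcases eq_or_lt_of_le hz.2 with h | h
  · rw [h]
  · exact (hanti hz (right_mem_Icc.2 (by norm_num)) h).le
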